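/- Let Φ(1) be the canonical r×r generator over F = ℚ[x]/(x^N+1) with x^{u_0+⋯+u_{r−1}} of order 2N, let v_0, …, v_{2Nr−1} ∈ ℚ satisfy v_{Nr+l} = −v_l for all l ∈ [Nr], and define v_0^{vec} = Σ_{i ∈ [Nr]} v_i Φ(−i) e_0 ∈ F^r. Then for every m ∈ ℤ_{2Nr}, the first coordinate of Φ(m) · v_0^{vec}, written as a polynomial of degree < N in x, has constant term equal to v_m. -/

import Mathlib

open Polynomial
open scoped Matrix

/-- The base ring `F = ℚ[x]/(x^N + 1)`. -/
noncomputable abbrev Fq (N : ℕ) : Type :=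
  Polynomial ℚ ⧸ Ideal.span ({X ^ N + 1} : Set (Polynomial ℚ))

/-- The class of `x` in `F`. -/
noncomputable def xq (N : ℕ) : Fq N :=
  Ideal.Quotient.mk (Ideal.span ({X ^ N + 1} : Set (Polynomial ℚ))) X

namespace Stmt16Aux

set_option synthInstance.maxHeartbeats 1000000 in
noncomputable instance fqSMulCommClass (N : ℕ) : SMulCommClass ℚ (Fq N) (Fq N) :=
  inferInstance

lemma pn_monic (N : ℕ) (hN : 0 < N) : (X ^ N + 1 : ℚ[X]).Monic := by
  simpa using Polynomial.monic_X_pow_add_C (a := (1:ℚ)) hN.ne'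

lemma pn_degree (N : ℕ) (hN : 0 < N) : (X ^ N + 1 : ℚ[X]).degree = N := by
  simpa using Polynomial.degree_X_pow_add_C hN (1:ℚ)

/-- constant-term functional on `Fq N`. -/
noncomputable def ct (N : ℕ) (hN : 0 < N) : Fq N → ℚ :=
  fun f => ((AdjoinRoot.modByMonicHom (pn_monic N hN)) f).coeff 0

lemma ct_mk (N : ℕ) (hN : 0 < N) (p : ℚ[X]) :
    ct N hN (Ideal.Quotient.mk (Ideal.span ({X ^ N + 1} : Set (Polynomial ℚ))) p) =
      (p %ₘ (X ^ N + 1)).coeff 0 := by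
  unfold ct
  rw [show (Ideal.Quotient.mk (Ideal.span ({X ^ N + 1} : Set (Polynomial ℚ))) p)
      = AdjoinRoot.mk _ p from rfl]
  rw [AdjoinRoot.modByMonicHom_mk]

lemma ct_mk_of_degree_lt (N : ℕ) (hN : 0 < N) (p : ℚ[X]) (hp : p.degree < (N : ℕ)) :
    ct N hN (Ideal.Quotient.mk (Ideal.span ({X ^ N + 1} : Set (Polynomial ℚ))) p) =
      p.coeff 0 := by
  rw [ct_mk, Polynomial.modByMonic_eq_self_iff (pn_monic N hN) |>.mpr]
  rw [pn_degree N hN]; exact hp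

lemma ct_smul (N : ℕ) (hN : 0 < N) (c : ℚ) (f : Fq N) :
    ct N hN (c • f) = c * ct N hN f := by
  unfold ct
  have h := map_smul (AdjoinRoot.modByMonicHom (pn_monic N hN)) c
    (show AdjoinRoot (X ^ N + 1 : ℚ[X]) from f)
  exact (congrArg (fun q => q.coeff 0) h).trans (coeff_smul _ _ _)

lemma ct_add (N : ℕ) (hN : 0 < N) (f g : Fq N) :
    ct N hN (f + g) = ct N hN f + ct N hN g := by
  unfold ct
  have h := map_add (AdjoinRoot.modByMonicHom (pn_monic N hN))
    (show AdjoinRoot (X ^ N + 1 : ℚ[X]) from f) (show AdjoinRoot (X ^ N + 1 : ℚ[X]) from g)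
  exact (congrArg (fun q => q.coeff 0) h).trans (coeff_add _ _ _)

lemma ct_zero (N : ℕ) (hN : 0 < N) : ct N hN 0 = 0 := by
  unfold ct
  have h := map_zero (AdjoinRoot.modByMonicHom (pn_monic N hN))
  exact (congrArg (fun q => q.coeff 0) h).trans (coeff_zero _)

lemma ct_sum (N : ℕ) (hN : 0 < N) (s : Finset ℕ) (f : ℕ → Fq N) :
    ct N hN (∑ i ∈ s, f i) = ∑ i ∈ s, ct N hN (f i) := by
  classical
  induction s using Finset.induction with
  | empty => simp [ct_zero]
  | insert a s h ih => rw [Finset.sum_insert h, Finset.sum_insert h, ct_add, ih]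

lemma xq_pow_N (N : ℕ) : (xq N) ^ N = -1 := by
  have h0 : Ideal.Quotient.mk (Ideal.span ({X ^ N + 1} : Set (Polynomial ℚ))) (X ^ N + 1) = 0 := by
    rw [Ideal.Quotient.eq_zero_iff_mem]; exact Ideal.subset_span rfl
  rw [map_add, map_one, map_pow] at h0
  have := eq_neg_of_add_eq_zero_left h0
  simpa [xq] using this

lemma ct_xq_pow (N : ℕ) (hN : 0 < N) (t : ℕ) :
    ct N hN ((xq N) ^ t) = if t % N = 0 then (-1 : ℚ) ^ (t / N) else 0 := by
  have hx : (xq N) ^ t = Ideal.Quotient.mk (Ideal.span ({X ^ N + 1} : Set (Polynomial ℚ)))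
      (C ((-1 : ℚ) ^ (t / N)) * X ^ (t % N)) := by
    conv_lhs => rw [show t = N * (t / N) + t % N from (Nat.div_add_mod t N).symm]
    rw [pow_add, pow_mul, xq_pow_N]
    rw [map_mul, map_pow, xq]
    congr 1
    rw [map_pow]
    congr 1
    simp [map_neg]
  rw [hx, ct_mk_of_degree_lt]
  · rw [Polynomial.coeff_C_mul, Polynomial.coeff_X_pow]
    by_cases h : t % N = 0 <;> simp [h, eq_comm]
  · calc (C ((-1 : ℚ) ^ (t / N)) * X ^ (t % N)).degree
        = (((-1 : ℚ) ^ (t / N)) • (X ^ (t % N) : ℚ[X])).degree := by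
          rw [Polynomial.smul_eq_C_mul]
      _ ≤ (X ^ (t % N) : ℚ[X]).degree := Polynomial.degree_smul_le _ _
      _ = (t % N : ℕ) := Polynomial.degree_X_pow _
      _ < (N : ℕ) := by exact_mod_cast Nat.mod_lt t hN

section Matrices

open Fin.NatCast Fin.CommRing

variable (N r : ℕ) [NeZero r] (u : Fin r → ℕ) (A : Matrix (Fin r) (Fin r) (Fq N))

lemma powEntry (hA : ∀ i j, A i j = if j = i - 1 then xq N ^ u i else 0) :
    ∀ (k : ℕ) (i j : Fin r), (A ^ k) i j =
      if j + (k : Fin r) = i then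
        xq N ^ (∑ t ∈ Finset.range k, u (i - (t : Fin r))) else 0 := by
  intro k
  induction k with
  | zero =>
    intro i j
    simp [Matrix.one_apply, eq_comm]
  | succ k ih =>
    intro i j
    rw [pow_succ, Matrix.mul_apply]
    rw [Finset.sum_eq_single_of_mem (j + 1) (Finset.mem_univ _)]
    · rw [hA]
      rw [if_pos (show j = (j+1) - 1 by ring)]
      rw [ih]
      have hcast : ((k + 1 : ℕ) : Fin r) = (k : Fin r) + 1 := by push_cast; ring
      rw [hcast]
      by_cases hc : j + ((k : Fin r) + 1) = i
      · have hc' : (j + 1) + (k : Fin r) = i := by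
          rw [← hc]; ring
        rw [if_pos hc', if_pos hc]
        rw [Finset.sum_range_succ, pow_add]
        congr 2
        have : j + 1 = i - (k : Fin r) := by
          rw [eq_sub_iff_add_eq, ← hc']
        rw [this]
      · have hc' : ¬ ((j + 1) + (k : Fin r) = i) := by
          intro h; apply hc; rw [← h]; ring
        rw [if_neg hc', if_neg hc, zero_mul]
    · intro b _ hb
      rw [hA]
      rw [if_neg, mul_zero]
      intro h
      apply hb
      rw [h]; ring

lemma multiBlock (q : ℕ) (c : Fin r) :
    ∑ t ∈ Finset.range (q * r), u (c - (t : Fin r)) = q * ∑ i, u i := by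
  induction q with
  | zero => simp
  | succ q ih =>
    have : (q + 1) * r = q * r + r := by ring
    rw [this, Finset.sum_range_add, ih]
    have hblock : ∑ t ∈ Finset.range r, u (c - ((q * r + t : ℕ) : Fin r))
        = ∑ i, u i := by
      have hc : ∀ t : ℕ, ((q * r + t : ℕ) : Fin r) = (t : Fin r) := by
        intro t; push_cast [Fin.natCast_self]; ring
      simp only [hc]
      rw [← Fin.sum_univ_eq_sum_range (fun t => u (c - (t : Fin r))) r]
      simp only [Fin.cast_val_eq_self]
      exact Equiv.sum_comp (Equiv.subLeft c) u
    rw [hblock]; ring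

end Matrices

end Stmt16Aux

open Stmt16Aux Fin.NatCast Fin.CommRing in
/-- Test-coefficient look-up property (Lemmas 6 and 7): for the canonical
generator `Φ(1)` with `x^{u_0+⋯+u_{r−1}}` of order `2N`, coefficients
`v : ℤ_{2Nr} → ℚ` with `v_{Nr+l} = −v_l`, and test vector
`v₀ = Σ_{i∈[Nr]} v_i Φ(−i) e_0`, for every `m` the first coordinate of
`Φ(m)·v₀`, written as a polynomial of degree `< N` in `x`, has constant
term `v_m`. -/
theorem stmt_16 (N r : ℕ) (hN : 0 < N) [NeZero r] (u : Fin r → ℕ)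
    (A : Matrix (Fin r) (Fin r) (Fq N))
    (hA : ∀ i j, A i j = if j = i - 1 then xq N ^ u i else 0)
    (horder : orderOf (xq N ^ (∑ i, u i)) = 2 * N)
    (hAu : IsUnit A)
    (v : ZMod (2 * N * r) → ℚ)
    (hv : ∀ l : ZMod (2 * N * r), v (l + (N * r : ℕ)) = - v l)
    (vvec : Fin r → Fq N)
    (hvvec : vvec = ∑ i ∈ Finset.range (N * r),
        v (i : ZMod (2 * N * r)) •
          (((hAu.unit ^ (-(i : ℤ))) : (Matrix (Fin r) (Fin r) (Fq N))ˣ).val *ᵥ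
            (Pi.single 0 1 : Fin r → Fq N))) :
    ∀ m : ℕ, ∀ p : Polynomial ℚ, p.degree < (N : ℕ) →
      Ideal.Quotient.mk (Ideal.span ({X ^ N + 1} : Set (Polynomial ℚ))) p =
        ((A ^ m) *ᵥ vvec) 0 →
      p.coeff 0 = v (m : ZMod (2 * N * r)) := by
  intro m p hdeg hmk
  have hr : 0 < r := Nat.pos_of_ne_zero (NeZero.ne r)
  set S : ℕ := ∑ i, u i with hS
  set y : Fq N := xq N ^ S with hy
  -- S is odd
  have hSodd : ¬ (2 ∣ S) := by
    intro ⟨c, hc⟩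
    have h1 : y ^ N = 1 := by
      rw [hy, ← pow_mul, mul_comm S N, pow_mul, xq_pow_N, hc, pow_mul]
      norm_num
    have h2 := orderOf_dvd_of_pow_eq_one h1
    rw [horder] at h2
    have := Nat.le_of_dvd hN h2
    omega
  -- ct of powers of y
  have hcty : ∀ q : ℕ, q < 2 * N →
      ct N hN (y ^ q) = (if q = 0 then 1 else if q = N then -1 else 0) := by
    intro q hq
    have hyq : y ^ q = xq N ^ (q * S) := by rw [hy, ← pow_mul, mul_comm]
    by_cases h : (q * S) % N = 0
    · -- N ∣ q * S, so q = 0 or q = N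
      have hdvd : N ∣ q * S := Nat.dvd_of_mod_eq_zero h
      obtain ⟨a, ha⟩ := hdvd
      have h2 : y ^ (2 * q) = 1 := by
        rw [hy, ← pow_mul,
          show S * (2 * q) = N * (2 * a) from by
            rw [show S * (2 * q) = 2 * (q * S) by ring, ha]; ring,
          pow_mul, xq_pow_N, pow_mul]
        norm_num
      have hdvd2 := orderOf_dvd_of_pow_eq_one h2
      rw [horder] at hdvd2
      have hNq : N ∣ q := by
        rcases hdvd2 with ⟨c, hc⟩
        refine ⟨c, Nat.eq_of_mul_eq_mul_left (show 0 < 2 by norm_num) ?_⟩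
        rw [hc]; ring
      rcases hNq with ⟨c, hc⟩
      have hc2 : c = 0 ∨ c = 1 := by
        rcases Nat.lt_or_ge c 2 with h' | h'
        · omega
        · exfalso; nlinarith
      rcases hc2 with rfl | rfl
      · simp only [Nat.mul_zero] at hc
        subst hc
        rw [pow_zero, if_pos rfl]
        rw [show (1 : Fq N) = xq N ^ 0 from (pow_zero _).symm, ct_xq_pow N hN]
        simp
      · rw [Nat.mul_one] at hc
        rw [hc] at hyq ⊢
        rw [hyq, mul_comm N S, ct_xq_pow N hN]
        rw [if_pos (by rw [mul_comm]; exact Nat.mul_mod_right N S)]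
        rw [mul_comm S N, Nat.mul_div_cancel_left _ hN]
        rw [if_neg hN.ne', if_pos rfl]
        exact Odd.neg_one_pow (Nat.odd_iff.mpr (by omega))
    · rw [hyq, ct_xq_pow N hN, if_neg h]
      have hq0 : q ≠ 0 := by rintro rfl; simp at h
      have hqN : q ≠ N := by
        rintro rfl
        exact h (by simp [Nat.mul_mod_right])
      rw [if_neg hq0, if_neg hqN]
  -- A ^ (2 * N * r) = 1
  have hA2Nr : A ^ (2 * N * r) = 1 := by
    ext i j
    rw [powEntry N r u A hA]
    have hcast : ((2 * N * r : ℕ) : Fin r) = 0 := by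
      push_cast [Fin.natCast_self]; ring
    rw [hcast, add_zero]
    have hsum : ∑ t ∈ Finset.range (2 * N * r), u (i - (t : Fin r)) = 2 * N * S := by
      rw [multiBlock]
    rw [hsum]
    have hyone : xq N ^ (2 * N * S) = 1 := by
      rw [show 2 * N * S = S * (2 * N) by ring, pow_mul, ← hy, ← horder,
        pow_orderOf_eq_one]
    rw [hyone]
    by_cases h : j = i
    · subst h; simp [Matrix.one_apply]
    · simp [Matrix.one_apply, h, Ne.symm h]
  have hkey : 2 * N * r = N * r + N * r := by ring
  have hp2pos : 0 < 2 * N * r := by positivity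
  have hUval : ((hAu.unit : (Matrix (Fin r) (Fin r) (Fq N))ˣ) :
      Matrix (Fin r) (Fin r) (Fq N)) = A := IsUnit.unit_spec hAu
  have hUper : hAu.unit ^ (2 * N * r) = 1 := by
    ext1
    rw [Units.val_pow_eq_pow_val, hUval, hA2Nr, Units.val_one]
  have hUzper : ∀ (a : ℕ) (t : ℤ),
      hAu.unit ^ ((a : ℤ) + ((2 * N * r : ℕ) : ℤ) * t) = hAu.unit ^ (a : ℕ) := by
    intro a t
    rw [zpow_add, zpow_natCast, zpow_mul, zpow_natCast, hUper, one_zpow, mul_one]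
  obtain ⟨m', hm'⟩ : ∃ m', m' = m % (2 * N * r) := ⟨_, rfl⟩
  have hm'lt : m' < 2 * N * r := hm' ▸ Nat.mod_lt m hp2pos
  have hmcast : (m : ZMod (2 * N * r)) = (m' : ZMod (2 * N * r)) := by
    rw [hm']; exact (ZMod.natCast_mod m (2 * N * r)).symm
  obtain ⟨d, hd⟩ : ∃ d : ℕ → ℕ,
      d = fun i => if i ≤ m' then m' - i else m' + 2 * N * r - i := ⟨_, rfl⟩
  have hdval : ∀ i, d i = if i ≤ m' then m' - i else m' + 2 * N * r - i :=
    fun i => by rw [hd]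
  have hdlt : ∀ i, i < N * r → d i < 2 * N * r := by
    intro i hi
    rw [hdval]
    by_cases h : i ≤ m' <;> simp only [h, if_true, if_false] <;> omega
  have hUred : ∀ i : ℕ, i < N * r → hAu.unit ^ ((m : ℤ) - i) = hAu.unit ^ (d i) := by
    intro i hi
    have hmQ : (m : ℤ) = ((2 * N * r : ℕ) : ℤ) * ((m / (2 * N * r) : ℕ) : ℤ) + (m' : ℤ) := by
      rw [hm']
      exact_mod_cast (Nat.div_add_mod m (2 * N * r)).symm
    by_cases h : i ≤ m'
    · have heq : (m : ℤ) - i = ((d i : ℕ) : ℤ) +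
          ((2 * N * r : ℕ) : ℤ) * ((m / (2 * N * r) : ℕ) : ℤ) := by
        have hdi : ((d i : ℕ) : ℤ) = (m' : ℤ) - i := by
          rw [hdval]; simp only [h, if_true]; push_cast [Nat.cast_sub h]; ring
        rw [hdi, hmQ]; ring
      rw [heq, hUzper]
    · have hle : i ≤ m' + 2 * N * r := by omega
      have heq : (m : ℤ) - i = ((d i : ℕ) : ℤ) +
          ((2 * N * r : ℕ) : ℤ) * (((m / (2 * N * r) : ℕ) : ℤ) - 1) := by
        have hdi : ((d i : ℕ) : ℤ) = (m' : ℤ) + ((2 * N * r : ℕ) : ℤ) - i := by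
          rw [hdval]; simp only [h, if_false]; push_cast [Nat.cast_sub hle]; ring
        rw [hdi, hmQ]; push_cast; ring
      rw [heq, hUzper]
  clear hm'
  -- value of ct for powers of A at (0,0)
  have hctA : ∀ n : ℕ, n < 2 * N * r →
      ct N hN ((A ^ n) 0 0) = (if n = 0 then 1 else if n = N * r then -1 else 0) := by
    intro n hn
    rw [powEntry N r u A hA, zero_add]
    by_cases h : (n : Fin r) = 0
    · rw [if_pos h]
      have hrn : r ∣ n := Fin.natCast_eq_zero.mp h
      obtain ⟨q, hq⟩ := hrn
      have hqlt : q < 2 * N := by nlinarith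
      have hsum : ∑ t ∈ Finset.range n, u ((0 : Fin r) - (t : Fin r)) = q * S := by
        rw [hq, mul_comm r q, multiBlock]
      rw [hsum, show xq N ^ (q * S) = y ^ q by rw [hy, ← pow_mul, mul_comm]]
      rw [hcty q hqlt]
      have e1 : (q = 0) = (n = 0) := by
        apply propext; constructor
        · rintro rfl; rw [hq]; ring
        · rintro rfl
          rcases Nat.mul_eq_zero.mp hq.symm with h' | h' <;> omega
      have e2 : (q = N) = (n = N * r) := by
        apply propext; constructor
        · rintro rfl; rw [hq]; ring
        · intro h'
          exact Nat.eq_of_mul_eq_mul_left hr (by rw [← hq, h']; ring)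
      simp only [e1, e2]
    · rw [if_neg h, ct_zero]
      have hn0 : n ≠ 0 := by
        rintro rfl; exact h (by simp)
      have hnNr : n ≠ N * r := by
        rintro rfl
        exact h (by rw [Fin.natCast_eq_zero]; exact ⟨N, mul_comm N r⟩)
      rw [if_neg hn0, if_neg hnNr]
  -- compute ((A ^ m) *ᵥ vvec) 0
  have hexp : ((A ^ m) *ᵥ vvec) 0 =
      ∑ i ∈ Finset.range (N * r),
        v (i : ZMod (2 * N * r)) • ((A ^ (d i)) 0 0) := by
    rw [hvvec]
    rw [show (A ^ m) *ᵥ (∑ i ∈ Finset.range (N * r),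
        v (i : ZMod (2 * N * r)) •
          (((hAu.unit ^ (-(i : ℤ))) : (Matrix (Fin r) (Fin r) (Fq N))ˣ).val *ᵥ
            (Pi.single 0 1 : Fin r → Fq N)))
      = ∑ i ∈ Finset.range (N * r), (A ^ m) *ᵥ
        (v (i : ZMod (2 * N * r)) •
          (((hAu.unit ^ (-(i : ℤ))) : (Matrix (Fin r) (Fin r) (Fq N))ˣ).val *ᵥ
            (Pi.single 0 1 : Fin r → Fq N))) from
      map_sum ((A ^ m).mulVecLin) _ _]
    rw [Finset.sum_apply]
    apply Finset.sum_congr rfl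
    intro i hi
    rw [Finset.mem_range] at hi
    rw [Matrix.mulVec_smul, Matrix.mulVec_mulVec]
    have hpow : A ^ m * ((hAu.unit ^ (-(i : ℤ))) : (Matrix (Fin r) (Fin r) (Fq N))ˣ).val
        = A ^ (d i) := by
      have hAm : A ^ m = ((hAu.unit ^ (m : ℤ) : (Matrix (Fin r) (Fin r) (Fq N))ˣ) :
          Matrix (Fin r) (Fin r) (Fq N)) := by
        rw [zpow_natCast, Units.val_pow_eq_pow_val, hUval]
      rw [hAm, ← Units.val_mul, ← zpow_add, ← sub_eq_add_neg, hUred i hi,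
        Units.val_pow_eq_pow_val, hUval]
    rw [hpow]
    simp [Matrix.mulVec_single, Pi.smul_apply]
  -- apply ct
  have hctv : p.coeff 0 = ∑ i ∈ Finset.range (N * r),
      v (i : ZMod (2 * N * r)) *
        (if d i = 0 then 1 else if d i = N * r then (-1 : ℚ) else 0) := by
    rw [← ct_mk_of_degree_lt N hN p hdeg, hmk, hexp, ct_sum]
    apply Finset.sum_congr rfl
    intro i hi
    rw [Finset.mem_range] at hi
    rw [ct_smul, hctA (d i) (hdlt i hi)]
  rw [hctv]
  -- now final combinatorial step
  have hterm : ∀ i, i < N * r →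
      (if d i = 0 then (1:ℚ) else if d i = N * r then -1 else 0)
      = (if i = m' then 1 else 0) + (if i + N * r = m' then -1 else 0) := by
    intro i hi
    rw [hdval i]
    by_cases h : i ≤ m'
    · rw [if_pos h]
      by_cases h0 : i = m'
      · rw [if_pos (show m' - i = 0 by omega), if_pos h0,
          if_neg (show ¬ i + N * r = m' by omega)]
        norm_num
      · rw [if_neg (show ¬ m' - i = 0 by omega), if_neg h0]
        by_cases h1 : i + N * r = m'
        · rw [if_pos (show m' - i = N * r by omega), if_pos h1]; norm_num
        · rw [if_neg (show ¬ m' - i = N * r by omega), if_neg h1]; norm_num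
    · rw [if_neg h, if_neg (show ¬ m' + 2 * N * r - i = 0 by omega),
        if_neg (show ¬ m' + 2 * N * r - i = N * r by omega),
        if_neg (show ¬ i = m' by omega), if_neg (show ¬ i + N * r = m' by omega)]
      norm_num
  rw [Finset.sum_congr rfl (fun i hi => by
    rw [hterm i (Finset.mem_range.mp hi)])]
  simp only [mul_add, mul_ite, mul_one, mul_zero, mul_neg]
  rw [Finset.sum_add_distrib]
  by_cases hcase : m' < N * r
  · have h1 : ∑ i ∈ Finset.range (N * r),
        (if i = m' then v (i : ZMod (2 * N * r)) else 0) = v (m' : ZMod (2 * N * r)) := by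
      rw [Finset.sum_ite_eq' (Finset.range (N * r)) m'
        (fun i => v ((i : ℕ) : ZMod (2 * N * r)))]
      rw [if_pos (Finset.mem_range.mpr hcase)]
    have h2 : ∀ i ∈ Finset.range (N * r),
        (if i + N * r = m' then -v (i : ZMod (2 * N * r)) else 0) = 0 := by
      intro i hi
      rw [if_neg (by omega)]
    rw [h1, Finset.sum_congr rfl h2, Finset.sum_const_zero, add_zero, hmcast]
  · have h1 : ∀ i ∈ Finset.range (N * r),
        (if i = m' then v (i : ZMod (2 * N * r)) else 0) = 0 := by
      intro i hi
      rw [Finset.mem_range] at hi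
      rw [if_neg (by omega)]
    have h2 : ∑ i ∈ Finset.range (N * r),
        (if i + N * r = m' then -v (i : ZMod (2 * N * r)) else 0)
        = -v ((m' - N * r : ℕ) : ZMod (2 * N * r)) := by
      have hcond : ∀ i, (i + N * r = m') = (i = m' - N * r) := by
        intro i; apply propext; omega
      simp only [hcond]
      rw [Finset.sum_ite_eq' (Finset.range (N * r)) (m' - N * r)
        (fun i => -v ((i : ℕ) : ZMod (2 * N * r)))]
      rw [if_pos (Finset.mem_range.mpr (by omega))]
    rw [Finset.sum_congr rfl h1, Finset.sum_const_zero, zero_add, h2, hmcast]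
    have hsplit : (m' : ZMod (2 * N * r)) =
        ((m' - N * r : ℕ) : ZMod (2 * N * r)) + ((N * r : ℕ) : ZMod (2 * N * r)) := by
      rw [← Nat.cast_add]
      congr 1
      omega
    rw [hsplit]
    rw [hv ((m' - N * r : ℕ) : ZMod (2 * N * r))]
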